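/- Let x* be a minimizer of F with F* = F(x*), let μ > 0, L_u > 0, μ_Ψ ≥ 0 and set τ_u = 1/(L_u + μ_Ψ) and q_u = μ τ_u, with q_u < 1. Let (x_k)_{k≥0} be a sequence in ℝ^n and (a_k)_{k≥1} reals with τ_u ≤ a_k < 1/μ for all k ≥ 1, such that F(x_{k+1}) ≤ F(x_k) for all k ≥ 1 and (1/2)‖x_{i+1} − x*‖² ≤ (1/2)(1 − a_{i+1} μ)‖x_i − x*‖² + a_{i+1}(F* − F(x_{i+1})) for all i ≥ 0. Then for every k ≥ 1, with π_i = Π_{j=1}^{i} 1/(1 − a_j μ): F(x_k) − F* ≤ ‖x₀ − x*‖² / (2 Σ_{i=1}^{k} a_i π_i) ≤ μ (1 − q_u)^k ‖x₀ − x*‖² / (1 − (1 − q_u)^k). -/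

import Mathlib

open Set
open scoped RealInnerProductSpace

/-- `Euc n` is the Euclidean space `ℝ^n`. -/
abbrev Euc (n : ℕ) := EuclideanSpace ℝ (Fin n)

/-- Theorem 6: under the strongly convex per-iteration contraction
`(1/2)‖x_{i+1} − x*‖² ≤ (1/2)(1 − a_{i+1}μ)‖x_i − x*‖² + a_{i+1}(F* − F(x_{i+1}))`,
monotonicity, and `τ_u ≤ a_k < 1/μ`, a linear rate holds: for `k ≥ 1`, with
`π_i = Π_{j=1}^i 1/(1 − a_j μ)` and `q_u = μ/(L_u + μ_Ψ)`,
`F(x_k) − F* ≤ ‖x₀ − x*‖²/(2 Σ_{i=1}^k a_i π_i)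
  ≤ μ (1 − q_u)^k ‖x₀ − x*‖²/(1 − (1 − q_u)^k)`. -/
theorem gmm_sc_linear_rate {n : ℕ}
    (f Ψ F : Euc n → ℝ)
    (hf : ConvexOn ℝ Set.univ f) (hfd : Differentiable ℝ f)
    (hΨ : ConvexOn ℝ Set.univ Ψ) (hΨlsc : LowerSemicontinuous Ψ)
    (hF : ∀ z, F z = f z + Ψ z)
    (xstar : Euc n) (hmin : ∀ y, F xstar ≤ F y)
    (μ L_u μΨ : ℝ) (hμ : 0 < μ) (hLu : 0 < L_u) (hμΨ : 0 ≤ μΨ)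
    (hqu : μ * (1 / (L_u + μΨ)) < 1)
    (x : ℕ → Euc n) (a : ℕ → ℝ)
    (ha : ∀ k, 1 ≤ k → 1 / (L_u + μΨ) ≤ a k ∧ a k < 1 / μ)
    (hmono : ∀ k, 1 ≤ k → F (x (k + 1)) ≤ F (x k))
    (hiter : ∀ i : ℕ,
      1 / 2 * ‖x (i + 1) - xstar‖ ^ 2
        ≤ 1 / 2 * (1 - a (i + 1) * μ) * ‖x i - xstar‖ ^ 2
          + a (i + 1) * (F xstar - F (x (i + 1)))) :
    ∀ k : ℕ, 1 ≤ k →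
      F (x k) - F xstar
        ≤ ‖x 0 - xstar‖ ^ 2
            / (2 * ∑ i ∈ Finset.Icc 1 k, a i * ∏ j ∈ Finset.Icc 1 i, (1 - a j * μ)⁻¹)
      ∧ ‖x 0 - xstar‖ ^ 2
            / (2 * ∑ i ∈ Finset.Icc 1 k, a i * ∏ j ∈ Finset.Icc 1 i, (1 - a j * μ)⁻¹)
          ≤ μ * (1 - μ * (1 / (L_u + μΨ))) ^ k * ‖x 0 - xstar‖ ^ 2
              / (1 - (1 - μ * (1 / (L_u + μΨ))) ^ k) := by
  intro k hk
  have hL : 0 < L_u + μΨ := by linarith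
  set τ : ℝ := 1 / (L_u + μΨ) with hτdef
  have hτ : 0 < τ := by positivity
  set q : ℝ := μ * τ with hqdef
  have hq0 : 0 < q := by positivity
  set r : ℝ := 1 - q with hrdef
  have hr0 : 0 < r := by simp only [hrdef]; linarith [hqu]
  have hr1 : r < 1 := by simp only [hrdef]; linarith
  have hfac : ∀ j, 1 ≤ j → 0 < 1 - a j * μ := by
    intro j hj
    have h2 := (ha j hj).2
    have : a j * μ < 1 := by
      calc a j * μ < (1 / μ) * μ := by exact mul_lt_mul_of_pos_right h2 hμ
        _ = 1 := by field_simp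
    linarith
  have hfacr : ∀ j, 1 ≤ j → 1 - a j * μ ≤ r := by
    intro j hj
    have h1 := (ha j hj).1
    have : q ≤ a j * μ := by
      calc q = τ * μ := by rw [hqdef]; ring
        _ ≤ a j * μ := mul_le_mul_of_nonneg_right h1 hμ.le
    simp only [hrdef]; linarith
  set π : ℕ → ℝ := fun i => ∏ j ∈ Finset.Icc 1 i, (1 - a j * μ)⁻¹ with hπdef
  have hπpos : ∀ i, 0 < π i := by
    intro i
    apply Finset.prod_pos
    intro j hj
    exact inv_pos.mpr (hfac j (Finset.mem_Icc.mp hj).1)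
  have hπsucc : ∀ i : ℕ, π (i + 1) = π i * (1 - a (i + 1) * μ)⁻¹ := by
    intro i
    simp only [hπdef]
    rw [Finset.prod_Icc_succ_top (by omega : 1 ≤ i + 1)]
  -- telescoping key inequality
  have key : ∀ m : ℕ, π m * (1 / 2 * ‖x m - xstar‖ ^ 2)
      + ∑ i ∈ Finset.Icc 1 m, a i * π i * (F (x i) - F xstar)
      ≤ 1 / 2 * ‖x 0 - xstar‖ ^ 2 := by
    intro m
    induction m with
    | zero => simp [hπdef]
    | succ m ih =>
      have hit := hiter m
      have hfp := hfac (m + 1) (by omega)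
      have hπm := hπpos m
      have hP : 0 < π m * (1 - a (m + 1) * μ)⁻¹ := mul_pos hπm (inv_pos.mpr hfp)
      have hinv : π m * (1 - a (m + 1) * μ)⁻¹ * (1 - a (m + 1) * μ) = π m := by
        field_simp
      rw [Finset.sum_Icc_succ_top (by omega : 1 ≤ m + 1), hπsucc m]
      have hmul := mul_le_mul_of_nonneg_left hit hP.le
      nlinarith [hmul, ih, hinv]
  have hΔ0 : ∀ i, 0 ≤ F (x i) - F xstar := fun i => by linarith [hmin (x i)]
  have hΔmono : ∀ i m : ℕ, 1 ≤ i → i ≤ m → F (x m) ≤ F (x i) := by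
    intro i m hi him
    induction m with
    | zero => omega
    | succ m ih =>
      rcases Nat.lt_or_ge i (m + 1) with h | h
      · have h1 : 1 ≤ m := by omega
        exact le_trans (hmono m h1) (ih (by omega))
      · have : i = m + 1 := by omega
        subst this; rfl
  set S : ℕ → ℝ := fun m => ∑ i ∈ Finset.Icc 1 m, a i * π i with hSdef
  have hSpos : 0 < S k := by
    apply Finset.sum_pos
    · intro i hi
      have hi1 := (Finset.mem_Icc.mp hi).1
      exact mul_pos (lt_of_lt_of_le hτ (ha i hi1).1) (hπpos i)
    · exact Finset.nonempty_Icc.mpr hk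
  -- first inequality
  have hsum1 : (F (x k) - F xstar) * S k ≤ 1 / 2 * ‖x 0 - xstar‖ ^ 2 := by
    have h1 : (F (x k) - F xstar) * S k
        ≤ ∑ i ∈ Finset.Icc 1 k, a i * π i * (F (x i) - F xstar) := by
      rw [hSdef]
      simp only []
      rw [Finset.mul_sum]
      apply Finset.sum_le_sum
      intro i hi
      obtain ⟨hi1, hi2⟩ := Finset.mem_Icc.mp hi
      have hΔ : F (x k) - F xstar ≤ F (x i) - F xstar := by
        linarith [hΔmono i k hi1 hi2]
      have hpos : 0 ≤ a i * π i := (mul_pos (lt_of_lt_of_le hτ (ha i hi1).1) (hπpos i)).le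
      calc (F (x k) - F xstar) * (a i * π i) = a i * π i * (F (x k) - F xstar) := by ring
        _ ≤ a i * π i * (F (x i) - F xstar) := mul_le_mul_of_nonneg_left hΔ hpos
    have h3 : 0 ≤ π k * (1 / 2 * ‖x k - xstar‖ ^ 2) :=
      mul_nonneg (hπpos k).le (by positivity)
    linarith [h1, key k]
  have first : F (x k) - F xstar ≤ ‖x 0 - xstar‖ ^ 2 / (2 * S k) := by
    rw [le_div_iff₀ (by positivity)]
    have hπRk : 0 ≤ π k * (1 / 2 * ‖x k - xstar‖ ^ 2) :=
      mul_nonneg (hπpos k).le (by positivity)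
    nlinarith [hsum1]
  -- geometric lower bound on S
  have hπlb : ∀ i : ℕ, (r ^ i)⁻¹ ≤ π i := by
    intro i
    have hcard : (Finset.Icc 1 i).card = i := by rw [Nat.card_Icc]; omega
    have : (r ^ i)⁻¹ = ∏ j ∈ Finset.Icc 1 i, r⁻¹ := by
      rw [Finset.prod_const, hcard, ← inv_pow]
    rw [this]
    apply Finset.prod_le_prod
    · intro j _; positivity
    · intro j hj
      have hj1 := (Finset.mem_Icc.mp hj).1
      exact inv_anti₀ (hfac j hj1) (hfacr j hj1)
  have hSlb : ∀ m : ℕ, (1 - r ^ m) / (μ * r ^ m) ≤ S m := by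
    intro m
    induction m with
    | zero => simp [hSdef]
    | succ m ih =>
      have hterm : τ * (r ^ (m + 1))⁻¹ ≤ a (m + 1) * π (m + 1) := by
        apply mul_le_mul (ha (m + 1) (by omega)).1 (hπlb (m + 1)) (by positivity)
        exact (lt_of_lt_of_le hτ (ha (m + 1) (by omega)).1).le
      have hS : S (m + 1) = S m + a (m + 1) * π (m + 1) := by
        simp only [hSdef]
        rw [Finset.sum_Icc_succ_top (by omega : 1 ≤ m + 1)]
      have heq : (1 - r ^ (m + 1)) / (μ * r ^ (m + 1))
          = (1 - r ^ m) / (μ * r ^ m) + τ * (r ^ (m + 1))⁻¹ := by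
        have hrm : (r : ℝ) ^ m ≠ 0 := by positivity
        have hrm1 : (r : ℝ) ^ (m + 1) ≠ 0 := by positivity
        have hτq : τ = q / μ := by rw [hqdef]; field_simp
        rw [hτq]
        field_simp
        ring_nf
        rw [hrdef]; ring
      rw [hS, heq]
      linarith [hterm]
  -- second inequality
  have hrk1 : r ^ k < 1 := pow_lt_one₀ hr0.le hr1 (by omega)
  have hrkpos : 0 < r ^ k := by positivity
  have h1rk : 0 < 1 - r ^ k := by linarith
  have hSlbk : (1 - r ^ k) / (μ * r ^ k) ≤ S k := hSlb k
  have hmrS : 1 - r ^ k ≤ S k * (μ * r ^ k) := by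
    rw [div_le_iff₀ (by positivity)] at hSlbk
    linarith
  have second : ‖x 0 - xstar‖ ^ 2 / (2 * S k)
      ≤ μ * r ^ k * ‖x 0 - xstar‖ ^ 2 / (1 - r ^ k) := by
    rw [div_le_div_iff₀ (by positivity) h1rk]
    have hA : 0 ≤ ‖x 0 - xstar‖ ^ 2 := sq_nonneg _
    nlinarith [mul_le_mul_of_nonneg_left hmrS hA]
  exact ⟨first, second⟩
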